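/- Let Λ₀ = N₁ℤ × ⋯ × N_kℤ ⊆ ℤ^k and suppose A ⊆ ℤ^k is closed under subtraction of each N_j e_j (i.e., a ∈ A implies a − N_j e_j ∈ A for all j), and A ⊕ R = ℤ^k for some finite R with |R| = N₁⋯N_k. Then A is contained in a single coset of Λ₀, and consequently A equals that coset. -/

import Mathlib

open Pointwise

private lemma powBound16 : ∀ (m : ℕ) (t D : ℤ), 0 ≤ D → D ≤ t →
    (t + D)^(m+1) ≤ t^(m+1) + (2^(m+1) - 1) * D * t^m := by
  intro m
  induction m with
  | zero => intro t D h0 h1; ring_nf; nlinarith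
  | succ m ih =>
    intro t D h0 h1
    have ht : (0:ℤ) ≤ t := le_trans h0 h1
    have h3 := ih t D h0 h1
    have hc : (1:ℤ) ≤ 2^(m+1) := by
      simpa using Int.add_one_le_of_lt (pow_pos two_pos (m+1))
    have hm : (0:ℤ) ≤ t^m := pow_nonneg ht m
    have e2 : (t:ℤ)^(m+1+1) = t^m * t * t := by ring
    have e3 : (t:ℤ)^(m+1) = t^m * t := by ring
    have e4 : (2:ℤ)^(m+1+1) = 2 * 2^(m+1) := by ring
    calc (t+D)^(m+1+1) = (t+D)^(m+1)*(t+D) := by ring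
      _ ≤ (t^(m+1) + (2^(m+1)-1)*D*t^m)*(t+D) :=
          mul_le_mul_of_nonneg_right h3 (by linarith)
      _ ≤ t^(m+1+1) + (2^(m+1+1)-1)*D*t^(m+1) := by
          rw [e2, e3, e4]
          nlinarith [mul_nonneg (mul_nonneg (mul_nonneg (by linarith : (0:ℤ) ≤ 2^(m+1)-1) h0) hm) (sub_nonneg.2 h1)]

def DistinctSums {G : Type*} [AddCommGroup G] (A F : Set G) : Prop :=
  ∀ a ∈ A, ∀ f ∈ F, ∀ a' ∈ A, ∀ f' ∈ F, a + f = a' + f' → a = a' ∧ f = f'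

set_option maxHeartbeats 2000000 in
theorem statement16 (k : ℕ) (N : Fin k → ℤ)
    (A : Set (Fin k → ℤ))
    (hclosed : ∀ a ∈ A, ∀ j : Fin k, (fun i => a i - if i = j then N j else 0) ∈ A)
    (R : Set (Fin k → ℤ)) (hRfin : R.Finite)
    (hcard : (R.ncard : ℤ) = ∏ j, N j)
    (hd : DistinctSums A R) (htile : A + R = Set.univ) :
    ∃ y : Fin k → ℤ, A = {x | ∀ j, N j ∣ x j - y j} := by
  classical
  have h0 : (0 : Fin k → ℤ) ∈ A + R := by rw [htile]; trivial
  obtain ⟨a₀, ha₀, r₁, hr₁, -⟩ := Set.mem_add.mp h0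
  have hRne : R.Nonempty := ⟨r₁, hr₁⟩
  have hNne : ∀ j, N j ≠ 0 := by
    intro j hj
    have hz : (∏ j, N j) = 0 := Finset.prod_eq_zero (Finset.mem_univ j) hj
    rw [hz] at hcard
    have : R.ncard = 0 := by exact_mod_cast hcard
    rw [Set.ncard_eq_zero hRfin] at this
    exact hRne.ne_empty this
  -- A is closed under subtracting arbitrary nonneg multiples
  have memA : ∀ n : Fin k → ℕ, ∀ a ∈ A, (fun i => a i - (n i : ℤ) * N i) ∈ A := by
    have key : ∀ s : ℕ, ∀ n : Fin k → ℕ, (∑ i, n i) = s →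
        ∀ a ∈ A, (fun i => a i - (n i : ℤ) * N i) ∈ A := by
      intro s
      induction s with
      | zero =>
        intro n hn a ha
        have hz : ∀ i, n i = 0 := by
          intro i
          have := (Finset.sum_eq_zero_iff.mp hn) i (Finset.mem_univ i)
          exact this
        have : (fun i => a i - (n i : ℤ) * N i) = a := by
          funext i; simp [hz i]
        rw [this]; exact ha
      | succ s ih =>
        intro n hn a ha
        have hex : ∃ j, n j ≠ 0 := by
          by_contra h; push_neg at h
          simp [h] at hn
        obtain ⟨j, hj⟩ := hex
        set n' := Function.update n j (n j - 1) with hn'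
        have hsum' : ∑ i, n' i = s := by
          have h1 : ∑ i, n' i = n' j + ∑ i ∈ Finset.univ.erase j, n' i :=
            (Finset.add_sum_erase _ _ (Finset.mem_univ j)).symm
          have h2 : ∑ i, n i = n j + ∑ i ∈ Finset.univ.erase j, n i :=
            (Finset.add_sum_erase _ _ (Finset.mem_univ j)).symm
          have h3 : ∑ i ∈ Finset.univ.erase j, n' i = ∑ i ∈ Finset.univ.erase j, n i := by
            apply Finset.sum_congr rfl
            intro i hi
            rw [hn', Function.update_of_ne (Finset.ne_of_mem_erase hi)]
          have h4 : n' j = n j - 1 := by rw [hn', Function.update_self]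
          omega
        have ha' := ih n' hsum' a ha
        have hstep := hclosed _ ha' j
        have heq : (fun i => a i - (n i : ℤ) * N i) =
            (fun i => (a i - (n' i : ℤ) * N i) - if i = j then N j else 0) := by
          funext i
          by_cases h : i = j
          · subst h
            have h4 : n' i = n i - 1 := by rw [hn', Function.update_self]
            have h5 : ((n i - 1 : ℕ) : ℤ) = (n i : ℤ) - 1 := by
              have : 1 ≤ n i := Nat.one_le_iff_ne_zero.2 hj
              omega
            rw [if_pos rfl, h4, h5]; ring
          · rw [hn', Function.update_of_ne h]
            simp [h]
        rw [heq]; exact hstep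
    intro n a ha; exact key (∑ i, n i) n rfl a ha
  -- Claim 1 : A lies in one coset
  have claim1 : ∀ a ∈ A, ∀ b ∈ A, ∀ j, N j ∣ a j - b j := by
    by_contra hcon
    push_neg at hcon
    obtain ⟨a, ha, b, hb, j₀, hj₀⟩ := hcon
    have hk : k ≠ 0 := fun h => (h ▸ j₀).elim0
    obtain ⟨m, rfl⟩ := Nat.exists_eq_succ_of_ne_zero hk
    set k := m + 1 with hkdef
    set M : Fin k → ℕ := fun j => (N j).natAbs with hM
    have hM1 : ∀ j, 1 ≤ M j := fun j => Int.natAbs_pos.mpr (hNne j)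
    have hMabs : ∀ j, ((M j : ℤ)) = |N j| := fun j => (Int.abs_eq_natAbs (N j)).symm
    set Rf : Finset (Fin k → ℤ) := hRfin.toFinset with hRf
    have hRfmem : ∀ r, r ∈ Rf ↔ r ∈ R := fun r => hRfin.mem_toFinset
    have hRfne : Rf.Nonempty := ⟨r₁, (hRfmem r₁).2 hr₁⟩
    have hRcard : Rf.card = ∏ j, M j := by
      have h0' : (Rf.card : ℤ) = ∏ j, N j := by
        rw [← hcard, Set.ncard_eq_toFinset_card R hRfin]
      have h1 : ((∏ j, M j : ℕ) : ℤ) = |∏ j, N j| := by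
        push_cast
        rw [Finset.abs_prod]
        exact Finset.prod_congr rfl (fun j _ => hMabs j)
      have h2 : |∏ j, N j| = ∏ j, N j := by
        apply abs_of_nonneg
        rw [← h0']
        positivity
      have : (Rf.card : ℤ) = ((∏ j, M j : ℕ) : ℤ) := by rw [h0', h1, h2]
      exact_mod_cast this
    -- uniform bound on R
    set Cn : ℕ := Rf.sup (fun r => Finset.univ.sup (fun j => (r j).natAbs)) with hCn
    have hC : ∀ r ∈ Rf, ∀ j, |r j| ≤ (Cn : ℤ) := by
      intro r hr j
      have h1 : (r j).natAbs ≤ Finset.univ.sup (fun j => (r j).natAbs) :=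
        Finset.le_sup (f := fun j => (r j).natAbs) (Finset.mem_univ j)
      have h1' : Finset.univ.sup (fun j => (r j).natAbs) ≤ Cn :=
        Finset.le_sup (f := fun r : Fin k → ℤ => Finset.univ.sup fun j => (r j).natAbs) hr
      have h1'' := le_trans h1 h1'
      rw [Int.abs_eq_natAbs]
      exact_mod_cast h1''
    set Dj : Fin k → ℕ := fun j => (max (a j) (b j) - min (a j) (b j) + 2*(Cn:ℤ) + 1).toNat
      with hDjdef
    have hDjval : ∀ j, (Dj j : ℤ) = max (a j) (b j) - min (a j) (b j) + 2*(Cn:ℤ) + 1 := by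
      intro j
      apply Int.toNat_of_nonneg
      have h1 : min (a j) (b j) ≤ max (a j) (b j) := min_le_max
      have h2 : (0:ℤ) ≤ (Cn:ℤ) := Int.natCast_nonneg _
      linarith
    have hDj1 : ∀ j, 1 ≤ Dj j := by
      intro j
      have h1 : min (a j) (b j) ≤ max (a j) (b j) := min_le_max
      have h2 : (0:ℤ) ≤ (Cn:ℤ) := Int.natCast_nonneg _
      have h3 : (1:ℤ) ≤ (Dj j : ℤ) := by rw [hDjval j]; linarith
      exact_mod_cast h3
    set D : ℕ := Finset.univ.sup Dj with hDdef
    have hD1 : 1 ≤ D := le_trans (hDj1 j₀) (Finset.le_sup (Finset.mem_univ j₀))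
    have hDjD : ∀ j, Dj j ≤ D := fun j => Finset.le_sup (Finset.mem_univ j)
    set t : ℕ := 2^k * D with htdef
    have ht1 : 1 ≤ t := by
      rw [htdef]
      have h2 : 0 < 2^k := Nat.pow_pos (by norm_num)
      exact Nat.one_le_iff_ne_zero.2 (Nat.mul_ne_zero h2.ne' (Nat.one_le_iff_ne_zero.1 hD1))
    -- the quadrant finsets
    set Q : (Fin k → ℤ) → Finset (Fin k → ℤ) :=
      fun c => (Fintype.piFinset (fun _ : Fin k => Finset.range (t+1))).image
        (fun n => fun i => c i - (n i : ℤ) * N i) with hQ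
    have hQmem : ∀ c x, x ∈ Q c ↔ ∃ n : Fin k → ℕ, (∀ i, n i < t + 1) ∧
        x = fun i => c i - (n i : ℤ) * N i := by
      intro c x
      rw [hQ]
      simp only [Finset.mem_image, Fintype.mem_piFinset, Finset.mem_range]
      constructor
      · rintro ⟨n, hn, rfl⟩; exact ⟨n, hn, rfl⟩
      · rintro ⟨n, hn, rfl⟩; exact ⟨n, hn, rfl⟩
    have hQsub : ∀ c ∈ A, ∀ x ∈ Q c, x ∈ A := by
      intro c hc x hx
      obtain ⟨n, -, rfl⟩ := (hQmem c x).1 hx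
      exact memA n c hc
    have hQcard : ∀ c, (Q c).card = (t+1)^k := by
      intro c
      rw [hQ, Finset.card_image_of_injOn, Fintype.card_piFinset]
      · simp [Finset.card_range, Finset.prod_const]
      · intro n hn n' hn' he
        funext i
        have h1 := congrFun he i
        simp only at h1
        have h2 : ((n i : ℤ)) * N i = ((n' i : ℤ)) * N i := by linarith
        have h3 := mul_right_cancel₀ (hNne i) h2
        exact_mod_cast h3
    have hQdisj : Disjoint (Q a) (Q b) := by
      rw [Finset.disjoint_left]
      intro x hxa hxb
      obtain ⟨n, -, hn⟩ := (hQmem a x).1 hxa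
      obtain ⟨n', -, hn'⟩ := (hQmem b x).1 hxb
      apply hj₀
      refine ⟨(n j₀ : ℤ) - (n' j₀ : ℤ), ?_⟩
      have h1 := congrFun hn j₀
      have h2 := congrFun hn' j₀
      linear_combination h2 - h1
    set S : Finset (Fin k → ℤ) := Q a ∪ Q b with hS
    have hSsubA : ∀ x ∈ S, x ∈ A := by
      intro x hx
      rcases Finset.mem_union.1 hx with h | h
      · exact hQsub a ha x h
      · exact hQsub b hb x h
    have hScard : S.card = 2 * (t+1)^k := by
      rw [hS, Finset.card_union_of_disjoint hQdisj, hQcard, hQcard]; ring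
    set P : Finset (Fin k → ℤ) := (S ×ˢ Rf).image (fun p => p.1 + p.2) with hP
    have hPcard : P.card = (2*(t+1)^k) * Rf.card := by
      rw [hP, Finset.card_image_of_injOn, Finset.card_product, hScard]
      intro p hp q hq he
      simp only [Finset.mem_coe, Finset.mem_product] at hp hq
      have h1 := hd p.1 (hSsubA _ hp.1) p.2 ((hRfmem _).1 hp.2) q.1 (hSsubA _ hq.1)
        q.2 ((hRfmem _).1 hq.2) he
      exact Prod.ext h1.1 h1.2
    set lo : Fin k → ℤ := fun j => min (a j) (b j) - Cn - t * max (N j) 0 with hlo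
    set hi : Fin k → ℤ := fun j => max (a j) (b j) + Cn - t * min (N j) 0 with hhi
    set B : Finset (Fin k → ℤ) := Fintype.piFinset (fun j => Finset.Icc (lo j) (hi j)) with hB
    have hPB : P ⊆ B := by
      intro x hx
      obtain ⟨p, hp, rfl⟩ := Finset.mem_image.mp hx
      simp only [Finset.mem_product] at hp
      obtain ⟨hp1, hp2⟩ := hp
      rw [hB, Fintype.mem_piFinset]
      intro j
      rw [Finset.mem_Icc]
      have hrb := hC p.2 hp2 j
      rw [abs_le] at hrb
      have hcase : ∃ c, (min (a j) (b j) ≤ c j ∧ c j ≤ max (a j) (b j)) ∧ p.1 ∈ Q c := by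
        rcases Finset.mem_union.1 hp1 with h | h
        · exact ⟨a, ⟨min_le_left _ _, le_max_left _ _⟩, h⟩
        · exact ⟨b, ⟨min_le_right _ _, le_max_right _ _⟩, h⟩
      obtain ⟨c, ⟨hc1, hc2⟩, hcQ⟩ := hcase
      obtain ⟨n, hn, hpe⟩ := (hQmem c p.1).1 hcQ
      have hnj : ((n j : ℤ)) ≤ (t : ℤ) := by exact_mod_cast Nat.lt_succ_iff.1 (hn j)
      have hnj0 : (0:ℤ) ≤ (n j : ℤ) := Int.natCast_nonneg _
      have hp1j : p.1 j = c j - (n j : ℤ) * N j := congrFun hpe j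
      have hlow : (t:ℤ) * min (N j) 0 ≤ (n j : ℤ) * N j := by
        rcases le_or_gt 0 (N j) with h | h
        · rw [min_eq_right h]
          simpa using mul_nonneg hnj0 h
        · rw [min_eq_left (le_of_lt h)]
          nlinarith
      have hhigh : (n j : ℤ) * N j ≤ (t:ℤ) * max (N j) 0 := by
        rcases le_or_gt 0 (N j) with h | h
        · rw [max_eq_left h]
          nlinarith
        · rw [max_eq_right (le_of_lt h)]
          nlinarith
      have hxj : (p.1 + p.2) j = c j - (n j : ℤ) * N j + p.2 j := by
        simp [hp1j]
      rw [hxj]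
      simp only [hlo, hhi]
      constructor
      · linarith [hrb.1]
      · linarith [hrb.2]
    have hBcard : B.card ≤ (t + D)^k * ∏ j, M j := by
      rw [hB, Fintype.card_piFinset]
      have hstep : ∀ j : Fin k, (Finset.Icc (lo j) (hi j)).card ≤ (t + D) * M j := by
        intro j
        rw [Int.card_Icc, Int.toNat_le]
        have habs : max (N j) 0 - min (N j) 0 = (M j : ℤ) := by
          rw [hMabs]
          rcases le_or_gt 0 (N j) with h | h
          · rw [max_eq_left h, min_eq_right h, abs_of_nonneg h]; ring
          · rw [max_eq_right (le_of_lt h), min_eq_left (le_of_lt h), abs_of_neg h]; ring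
        have hDv := hDjval j
        have hDle : ((Dj j : ℤ)) ≤ (D : ℤ) := by exact_mod_cast hDjD j
        have hMge : (1:ℤ) ≤ (M j : ℤ) := by exact_mod_cast hM1 j
        have hDnn : (0:ℤ) ≤ (D:ℤ) := Int.natCast_nonneg _
        have key : hi j + 1 - lo j = (Dj j : ℤ) + (t:ℤ) * (M j : ℤ) := by
          simp only [hlo, hhi]
          rw [hDv, ← habs]; ring
        rw [key]
        push_cast
        nlinarith [mul_nonneg hDnn (sub_nonneg.2 hMge)]
      calc ∏ j, (Finset.Icc (lo j) (hi j)).card ≤ ∏ j, ((t + D) * M j) :=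
            Finset.prod_le_prod' (fun j _ => hstep j)
        _ = (t+D)^k * ∏ j, M j := by
            rw [Finset.prod_mul_distrib, Finset.prod_const, Finset.card_univ, Fintype.card_fin]
    have hRpos : 0 < Rf.card := Finset.card_pos.2 hRfne
    have hmain : 2*(t+1)^k ≤ (t+D)^k := by
      have h1 : (2*(t+1)^k) * Rf.card ≤ (t+D)^k * Rf.card := by
        calc (2*(t+1)^k) * Rf.card = P.card := hPcard.symm
          _ ≤ B.card := Finset.card_le_card hPB
          _ ≤ (t+D)^k * ∏ j, M j := hBcard
          _ = (t+D)^k * Rf.card := by rw [hRcard]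
      exact Nat.le_of_mul_le_mul_right h1 hRpos
    -- final arithmetic contradiction
    clear_value t D
    clear hB hPB hBcard hPcard hRpos hScard hSsubA hQdisj hQcard hQsub hQmem hC
      hRcard hRfne hRfmem hDjval hDj1 hDjD hMabs hM1 hlo hhi hP hS hQ hDjdef hCn hRf hM hDdef
    clear B lo hi P S Q Dj Cn M Rf
    have hcast : ((t:ℤ)) = 2^k * (D:ℤ) := by rw [htdef]; push_cast; ring
    have hDz : (0:ℤ) ≤ (D:ℤ) := Int.natCast_nonneg _
    have hD1z : (1:ℤ) ≤ (D:ℤ) := by exact_mod_cast hD1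
    have h2k : (1:ℤ) ≤ 2^k := by
      simpa using Int.add_one_le_of_lt (pow_pos two_pos k)
    have htz : ((D:ℤ)) ≤ (t:ℤ) := by
      rw [hcast]
      exact le_mul_of_one_le_left hDz h2k
    have hpb := powBound16 m (t:ℤ) (D:ℤ) hDz htz
    have hmainz : 2*((t:ℤ)+1)^(m+1) ≤ ((t:ℤ)+(D:ℤ))^(m+1) := by
      have h := hmain
      rw [hkdef] at h
      exact_mod_cast h
    have htpos : (1:ℤ) ≤ (t:ℤ) := by exact_mod_cast ht1
    have htm : (0:ℤ) < (t:ℤ)^m := pow_pos (by linarith) m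
    have hlt : (2^(m+1) - 1) * (D:ℤ) * (t:ℤ)^m < (t:ℤ)^(m+1) := by
      have h1 : (2^(m+1) - 1) * (D:ℤ) < (t:ℤ) := by
        rw [hcast, hkdef]
        exact mul_lt_mul_of_pos_right (by linarith) (by linarith)
      have h2 : (t:ℤ)^(m+1) = (t:ℤ) * (t:ℤ)^m := by ring
      rw [h2]
      exact mul_lt_mul_of_pos_right h1 htm
    have hmono : ((t:ℤ))^(m+1) ≤ ((t:ℤ)+1)^(m+1) :=
      pow_le_pow_left₀ (Int.natCast_nonneg t) (by linarith) (m+1)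
    linarith
  -- existence of r₀ ∈ R with all coords divisible
  obtain ⟨b₀, hb₀, r₀, hr₀, hsum₀⟩ := Set.mem_add.mp (by rw [htile]; trivial : a₀ ∈ A + R)
  have hr₀div : ∀ j, N j ∣ r₀ j := by
    intro j
    have : r₀ j = a₀ j - b₀ j := by
      have := congrFun hsum₀ j
      simp only [Pi.add_apply] at this
      linarith
    rw [this]; exact claim1 a₀ ha₀ b₀ hb₀ j
  -- uniqueness of such r
  have hr₀uniq : ∀ r ∈ R, (∀ j, N j ∣ r j) → r = r₀ := by
    intro r hr hdiv
    obtain ⟨mm, hmm⟩ : ∃ mm : Fin k → ℤ, ∀ j, r₀ j - r j = mm j * N j := by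
      refine ⟨fun j => (r₀ j - r j) / N j, fun j => ?_⟩
      have : N j ∣ r₀ j - r j := dvd_sub (hr₀div j) (hdiv j)
      rw [Int.ediv_mul_cancel this]
    set u : Fin k → ℕ := fun i => ((mm i).toNat + (-(mm i)).toNat) with hu
    have hui : ∀ i, (u i : ℤ) = |mm i| := by
      intro i; rw [hu]; push_cast
      rcases le_or_gt 0 (mm i) with h | h
      · rw [abs_of_nonneg h, Int.toNat_of_nonneg h, Int.toNat_of_nonpos (by linarith)]; ring
      · rw [abs_of_neg h, Int.toNat_of_nonpos (le_of_lt h), Int.toNat_of_nonneg (by linarith)]; ring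
    set w : Fin k → ℕ := fun i => ((u i : ℤ) - mm i).toNat with hw
    have hwi : ∀ i, (w i : ℤ) = (u i : ℤ) - mm i := by
      intro i
      rw [hw, Int.toNat_of_nonneg]
      rw [hui i]
      linarith [le_abs_self (mm i)]
    have hc : (fun i => a₀ i - (u i : ℤ) * N i) ∈ A := memA u a₀ ha₀
    have hc' : (fun i => a₀ i - (w i : ℤ) * N i) ∈ A := memA w a₀ ha₀
    have hkey : (fun i => a₀ i - (w i : ℤ) * N i) + r = (fun i => a₀ i - (u i : ℤ) * N i) + r₀ := by
      funext i
      simp only [Pi.add_apply]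
      rw [hwi i]
      linear_combination -hmm i
    exact (hd _ hc' r hr _ hc r₀ hr₀ hkey).2
  refine ⟨b₀, Set.Subset.antisymm ?_ ?_⟩
  · intro a ha j
    exact claim1 a ha b₀ hb₀ j
  · intro x hx
    simp only [Set.mem_setOf_eq] at hx
    have hx' : (x + r₀ : Fin k → ℤ) ∈ A + R := by rw [htile]; trivial
    obtain ⟨b, hb, r, hrR, hsum⟩ := Set.mem_add.mp hx'
    have hrdiv : ∀ j, N j ∣ r j := by
      intro j
      have h1 : r j = x j + r₀ j - b j := by
        have := congrFun hsum j; simp only [Pi.add_apply] at this; linarith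
      rw [h1]
      have h2 : N j ∣ x j - b j := by
        have := claim1 b₀ hb₀ b hb j
        have h3 : x j - b j = (x j - b₀ j) + (b₀ j - b j) := by ring
        rw [h3]
        exact dvd_add (hx j) (dvd_neg.mp (by simpa [neg_sub] using (claim1 b hb b₀ hb₀ j)))
      have : x j + r₀ j - b j = (x j - b j) + r₀ j := by ring
      rw [this]; exact dvd_add h2 (hr₀div j)
    have := hr₀uniq r hrR hrdiv
    subst this
    have : x = b := by
      funext j
      have := congrFun hsum j; simp only [Pi.add_apply] at this; linarith
    rw [this]; exact hb
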